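/- If (x, p) is IC, then the expected payment equals the payment at zero plus the expected Myerson virtual welfare: E_v[p(v)] = p(0) + E_v[(v − (1 − F(v))/f(v))·x(v)], where the expectation is taken with respect to the density f. (Measurability is automatic: IC implies x is nondecreasing and u(v) = v·x(v) − p(v) is convex.) -/

import Mathlib

open MeasureTheory intervalIntegral

/-- For a single-buyer, single-item IC mechanism `(x, p)` on `[0, v̄]`
and a value distributed with positive density `f` and CDF `F`, the expected payment
equals the payment at zero plus the expected Myerson virtual welfare:
`E_v[p(v)] = p(0) + E_v[(v − (1 − F(v))/f(v))·x(v)]`. -/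
theorem expected_payment_eq_expected_virtual_welfare
    (vbar : ℝ) (hvbar : 0 < vbar)
    (x p : ℝ → ℝ)
    (hx01 : ∀ v ∈ Set.Icc (0 : ℝ) vbar, x v ∈ Set.Icc (0 : ℝ) 1)
    (hIC : ∀ v ∈ Set.Icc (0 : ℝ) vbar, ∀ v' ∈ Set.Icc (0 : ℝ) vbar,
      v * x v' - p v' ≤ v * x v - p v)
    (f : ℝ → ℝ)
    (hfint : IntervalIntegrable f volume 0 vbar)
    (hfpos : ∀ v ∈ Set.Icc (0 : ℝ) vbar, 0 < f v)
    (F : ℝ → ℝ)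
    (hF : ∀ w ∈ Set.Icc (0 : ℝ) vbar, F w = ∫ s in (0 : ℝ)..w, f s)
    (hF1 : F vbar = 1) :
    (∫ v in (0 : ℝ)..vbar, p v * f v)
      = p 0 + ∫ v in (0 : ℝ)..vbar, (v - (1 - F v) / f v) * x v * f v := by
  have hvb : (0 : ℝ) ≤ vbar := hvbar.le
  -- clamp function
  set c : ℝ → ℝ := fun v => max 0 (min v vbar) with hc_def
  have hcmem : ∀ v, c v ∈ Set.Icc (0 : ℝ) vbar := by
    intro v
    exact ⟨le_max_left _ _, max_le hvb (min_le_right _ _)⟩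
  have hceq : ∀ v ∈ Set.Icc (0 : ℝ) vbar, c v = v := by
    intro v hv
    simp only [hc_def]
    rw [min_eq_left hv.2, max_eq_right hv.1]
  have hcmono : Monotone c := by
    intro a b hab
    exact max_le_max le_rfl (min_le_min hab le_rfl)
  have hccont : Continuous c := continuous_const.max (continuous_id.min continuous_const)
  -- monotonicity of x on the interval
  have hxmono : ∀ a ∈ Set.Icc (0 : ℝ) vbar, ∀ b ∈ Set.Icc (0 : ℝ) vbar, a ≤ b → x a ≤ x b := by
    intro a ha b hb hab
    rcases eq_or_lt_of_le hab with rfl | hlt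
    · exact le_rfl
    · have h1 := hIC b hb a ha
      have h2 := hIC a ha b hb
      nlinarith
  set x' : ℝ → ℝ := fun v => x (c v) with hx'_def
  have hx'mem : ∀ v, x' v ∈ Set.Icc (0 : ℝ) 1 := fun v => hx01 _ (hcmem v)
  have hx'mono : Monotone x' := fun a b hab =>
    hxmono _ (hcmem a) _ (hcmem b) (hcmono hab)
  have hx'eq : ∀ v ∈ Set.Icc (0 : ℝ) vbar, x' v = x v := by
    intro v hv; simp only [hx'_def, hceq v hv]
  have hx'int : ∀ a b : ℝ, IntervalIntegrable x' volume a b := fun a b =>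
    hx'mono.intervalIntegrable
  have hx'meas : Measurable x' := hx'mono.measurable
  -- utility
  set u : ℝ → ℝ := fun v => v * x v - p v with hu_def
  have hu0 : u 0 = -p 0 := by simp [hu_def]
  -- squeeze inequalities
  have hsq : ∀ a ∈ Set.Icc (0 : ℝ) vbar, ∀ b ∈ Set.Icc (0 : ℝ) vbar, a ≤ b →
      x a * (b - a) ≤ u b - u a ∧ u b - u a ≤ x b * (b - a) := by
    intro a ha b hb hab
    have h1 := hIC b hb a ha
    have h2 := hIC a ha b hb
    constructor <;> (simp only [hu_def]; nlinarith)
  -- primitive of x'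
  set G : ℝ → ℝ := fun v => ∫ s in (0 : ℝ)..v, x' s with hG_def
  have hGcont : Continuous G := intervalIntegral.continuous_primitive hx'int 0
  -- envelope theorem
  have henv : ∀ v ∈ Set.Icc (0 : ℝ) vbar, u v - u 0 = G v := by
    intro v hv
    have key : ∀ n : ℕ, |u v - u 0 - G v| ≤ vbar / (n + 1) := by
      intro n
      set m : ℕ := n + 1 with hm_def
      have hmpos : (0 : ℝ) < m := by positivity
      set g : ℕ → ℝ := fun i => (i : ℝ) * v / m with hg_def
      have hg0 : g 0 = 0 := by simp [hg_def]
      have hgm : g m = v := by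
        have hm0 : (m : ℝ) ≠ 0 := hmpos.ne'
        simp only [hg_def]
        field_simp
      have hgmem : ∀ i : ℕ, i ≤ m → g i ∈ Set.Icc (0 : ℝ) vbar := by
        intro i hi
        constructor
        · have h0 : (0 : ℝ) ≤ (i : ℝ) * v := mul_nonneg (Nat.cast_nonneg i) hv.1
          simp only [hg_def]
          positivity
        · have h1 : (i : ℝ) * v / m ≤ v := by
            rw [div_le_iff₀ hmpos]
            have hi' : (i : ℝ) ≤ m := Nat.cast_le.mpr hi
            nlinarith [hv.1]
          exact h1.trans hv.2
      have hgstep : ∀ i : ℕ, g (i + 1) - g i = v / m := by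
        intro i
        simp only [hg_def]
        push_cast
        ring
      have hgmono : ∀ i : ℕ, g i ≤ g (i + 1) := by
        intro i
        have h := hgstep i
        have hvm : 0 ≤ v / m := div_nonneg hv.1 hmpos.le
        linarith
      -- telescoping of u
      have htel : u v - u 0 = ∑ i ∈ Finset.range m, (u (g (i + 1)) - u (g i)) := by
        rw [Finset.sum_range_sub (fun i => u (g i)), hg0, hgm]
      -- splitting of the integral
      have hintsplit : G v = ∑ i ∈ Finset.range m, ∫ s in g i..g (i + 1), x' s := by
        have h := intervalIntegral.sum_integral_adjacent_intervals
          (a := g) (n := m) (fun k _ => hx'int _ _)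
        rw [hg0, hgm] at h
        exact h.symm
      -- per-term bound
      have hterm : ∀ i ∈ Finset.range m,
          |(u (g (i + 1)) - u (g i)) - ∫ s in g i..g (i + 1), x' s|
            ≤ (x' (g (i + 1)) - x' (g i)) * (v / m) := by
        intro i hi
        have him : i < m := Finset.mem_range.mp hi
        have ha : g i ∈ Set.Icc (0 : ℝ) vbar := hgmem i him.le
        have hb : g (i + 1) ∈ Set.Icc (0 : ℝ) vbar := hgmem (i + 1) him
        have hab : g i ≤ g (i + 1) := hgmono i
        have hxa : x' (g i) = x (g i) := hx'eq _ ha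
        have hxb : x' (g (i + 1)) = x (g (i + 1)) := hx'eq _ hb
        obtain ⟨hl, hr⟩ := hsq (g i) ha (g (i + 1)) hb hab
        have hI1 : x' (g i) * (g (i + 1) - g i) ≤ ∫ s in g i..g (i + 1), x' s := by
          have hmono := intervalIntegral.integral_mono_on hab
            (_root_.intervalIntegrable_const (c := x' (g i))) (hx'int _ _)
            (fun s hs => hx'mono hs.1)
          rwa [intervalIntegral.integral_const, smul_eq_mul, mul_comm] at hmono
        have hI2 : (∫ s in g i..g (i + 1), x' s) ≤ x' (g (i + 1)) * (g (i + 1) - g i) := by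
          have hmono := intervalIntegral.integral_mono_on hab (hx'int _ _)
            (_root_.intervalIntegrable_const (c := x' (g (i + 1))))
            (fun s hs => hx'mono hs.2)
          rwa [intervalIntegral.integral_const, smul_eq_mul, mul_comm] at hmono
        rw [abs_le]
        rw [hgstep i] at hI1 hI2
        have hgs : g (i + 1) - g i = v / m := hgstep i
        constructor
        · rw [← hxa, hgs] at hl
          linarith
        · rw [← hxb, hgs] at hr
          linarith
      have hsum : |u v - u 0 - G v| ≤ (x' (g m) - x' (g 0)) * (v / m) := by
        rw [htel, hintsplit, ← Finset.sum_sub_distrib]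
        calc |∑ i ∈ Finset.range m, ((u (g (i + 1)) - u (g i)) - ∫ s in g i..g (i + 1), x' s)|
            ≤ ∑ i ∈ Finset.range m,
              |(u (g (i + 1)) - u (g i)) - ∫ s in g i..g (i + 1), x' s| :=
              Finset.abs_sum_le_sum_abs _ _
          _ ≤ ∑ i ∈ Finset.range m, (x' (g (i + 1)) - x' (g i)) * (v / m) :=
              Finset.sum_le_sum hterm
          _ = (x' (g m) - x' (g 0)) * (v / m) := by
              rw [← Finset.sum_mul, Finset.sum_range_sub (fun i => x' (g i))]
      have hfinal : (x' (g m) - x' (g 0)) * (v / m) ≤ vbar / m := by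
        have h1 : x' (g m) - x' (g 0) ≤ 1 := by
          have ha := (hx'mem (g m)).2
          have hb := (hx'mem (g 0)).1
          linarith
        have h2 : 0 ≤ x' (g m) - x' (g 0) := by
          have hle : g 0 ≤ g m := by rw [hg0, hgm]; exact hv.1
          linarith [hx'mono hle]
        have h3 : v / m ≤ vbar / m := by
          gcongr
          exact hv.2
        have h4 : 0 ≤ v / m := div_nonneg hv.1 hmpos.le
        nlinarith
      have : ((m : ℝ)) = (n : ℝ) + 1 := by simp [hm_def]
      rw [← this]
      exact hsum.trans hfinal
    have habs : |u v - u 0 - G v| = 0 := by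
      by_contra h
      have hpos : 0 < |u v - u 0 - G v| :=
        lt_of_le_of_ne (abs_nonneg _) (Ne.symm h)
      obtain ⟨n, hn⟩ := exists_nat_gt (vbar / |u v - u 0 - G v|)
      have h1 : vbar / ((n : ℝ) + 1) < |u v - u 0 - G v| := by
        rw [div_lt_iff₀ (by positivity)]
        rw [div_lt_iff₀ hpos] at hn
        nlinarith
      linarith [key n]
    have := abs_eq_zero.mp habs
    linarith
  -- the cdf primitive
  set Ft : ℝ → ℝ := fun w => ∫ s in (0 : ℝ)..w, f s with hFt_def
  have hFicc : IntegrableOn f (Set.Icc (0 : ℝ) vbar) volume :=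
    (intervalIntegrable_iff_integrableOn_Icc_of_le hvb).mp hfint
  have hFtcont : ContinuousOn Ft (Set.Icc (0 : ℝ) vbar) := by
    have h := intervalIntegral.continuousOn_primitive_interval
      (a := (0 : ℝ)) (b := vbar) (μ := volume) (f := f)
      (by rwa [Set.uIcc_of_le hvb])
    rwa [Set.uIcc_of_le hvb] at h
  set Fc : ℝ → ℝ := fun v => Ft (c v) with hFc_def
  have hFccont : Continuous Fc := hFtcont.comp_continuous hccont hcmem
  have hFteq : ∀ v ∈ Set.Icc (0 : ℝ) vbar, Ft v = F v := by
    intro v hv; rw [hF v hv]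
  have hFceq : ∀ v ∈ Set.Icc (0 : ℝ) vbar, Fc v = F v := by
    intro v hv; rw [hFc_def]; simp only [hceq v hv]; exact hFteq v hv
  have hFtvbar : Ft vbar = 1 := by rw [hFteq vbar ⟨hvb, le_rfl⟩, hF1]
  -- bounds for Ft on the interval
  have hfsub : ∀ a b : ℝ, a ∈ Set.Icc (0 : ℝ) vbar → b ∈ Set.Icc (0 : ℝ) vbar →
      IntervalIntegrable f volume a b := by
    intro a b ha hb
    apply hfint.mono_set
    rw [Set.uIcc_of_le hvb]
    exact Set.uIcc_subset_Icc ha hb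
  have hFtmono : ∀ a ∈ Set.Icc (0 : ℝ) vbar, ∀ b ∈ Set.Icc (0 : ℝ) vbar, a ≤ b →
      Ft a ≤ Ft b := by
    intro a ha b hb hab
    have hsub : Ft b - Ft a = ∫ s in a..b, f s := by
      rw [hFt_def]
      exact intervalIntegral.integral_interval_sub_left
        (hfsub 0 b ⟨le_rfl, hvb⟩ hb) (hfsub 0 a ⟨le_rfl, hvb⟩ ha)
    have hnn : 0 ≤ ∫ s in a..b, f s := by
      apply intervalIntegral.integral_nonneg hab
      intro s hs
      exact (hfpos s ⟨ha.1.trans hs.1, hs.2.trans hb.2⟩).le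
    linarith
  have hFtmem : ∀ v ∈ Set.Icc (0 : ℝ) vbar, Ft v ∈ Set.Icc (0 : ℝ) 1 := by
    intro v hv
    constructor
    · have : Ft 0 = 0 := by simp [hFt_def]
      have := hFtmono 0 ⟨le_rfl, hvb⟩ v hv hv.1
      simp [hFt_def] at this ⊢
      simpa [hFt_def] using this
    · have := hFtmono v hv vbar ⟨hvb, le_rfl⟩ hv.2
      rw [hFtvbar] at this
      exact this
  -- integrability facts
  have hfIoc : IntegrableOn f (Set.Ioc (0 : ℝ) vbar) volume :=
    (intervalIntegrable_iff_integrableOn_Ioc_of_le hvb).mp hfint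
  have hx'Ioc : IntegrableOn x' (Set.Ioc (0 : ℝ) vbar) volume :=
    (intervalIntegrable_iff_integrableOn_Ioc_of_le hvb).mp (hx'int 0 vbar)
  have hw1 : IntervalIntegrable (fun v => c v * x' v * f v) volume 0 vbar := by
    rw [intervalIntegrable_iff_integrableOn_Ioc_of_le hvb]
    apply Integrable.bdd_mul (c := vbar * 1) hfIoc
      ((hccont.measurable.mul hx'meas).aestronglyMeasurable)
    apply Filter.Eventually.of_forall
    intro v
    have h1 : |c v| ≤ vbar := by
      rw [abs_le]
      exact ⟨by linarith [(hcmem v).1], (hcmem v).2⟩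
    have h2 : |x' v| ≤ 1 := by
      rw [abs_le]
      exact ⟨by linarith [(hx'mem v).1], (hx'mem v).2⟩
    calc ‖c v * x' v‖ = |c v| * |x' v| := abs_mul _ _
      _ ≤ vbar * 1 := mul_le_mul h1 h2 (abs_nonneg _) hvb
  have hw2 : IntervalIntegrable (fun v => p 0 * f v) volume 0 vbar :=
    hfint.const_mul (p 0)
  have hw3 : IntervalIntegrable (fun v => G v * f v) volume 0 vbar := by
    rw [intervalIntegrable_iff_integrableOn_Ioc_of_le hvb]
    apply Integrable.bdd_mul (c := vbar) hfIoc hGcont.aestronglyMeasurable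
    rw [ae_restrict_iff' measurableSet_Ioc]
    apply Filter.Eventually.of_forall
    intro v hv
    have h0 : 0 ≤ G v := by
      apply intervalIntegral.integral_nonneg hv.1.le
      intro s _
      exact (hx'mem s).1
    have h1 : G v ≤ v := by
      have hmono := intervalIntegral.integral_mono_on hv.1.le (hx'int 0 v)
        (_root_.intervalIntegrable_const (c := (1 : ℝ))) (fun s _ => (hx'mem s).2)
      simpa using hmono
    rw [Real.norm_eq_abs, abs_of_nonneg h0]
    linarith [hv.2]
  have hw4 : IntervalIntegrable (fun v => (1 - Fc v) * x' v) volume 0 vbar := by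
    rw [intervalIntegrable_iff_integrableOn_Ioc_of_le hvb]
    apply Integrable.bdd_mul (c := 1) hx'Ioc
      ((continuous_const.sub hFccont).aestronglyMeasurable)
    rw [ae_restrict_iff' measurableSet_Ioc]
    apply Filter.Eventually.of_forall
    intro v hv
    have hvicc : v ∈ Set.Icc (0 : ℝ) vbar := ⟨hv.1.le, hv.2⟩
    have hmem : Ft v ∈ Set.Icc (0 : ℝ) 1 := hFtmem v hvicc
    have hFcv : Fc v = Ft v := by rw [hFc_def]; simp only [hceq v hvicc]
    rw [Real.norm_eq_abs, show (((fun _ => (1 : ℝ)) - Fc : ℝ → ℝ)) v = 1 - Fc v from rfl, hFcv, abs_le]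
    constructor <;> [linarith [hmem.2]; linarith [hmem.1]]
  -- Fubini: ∫ G f = ∫ (1 - Fc) x'
  have hfub : (∫ v in (0 : ℝ)..vbar, G v * f v)
      = ∫ s in (0 : ℝ)..vbar, (1 - Fc s) * x' s := by
    rw [intervalIntegral.integral_of_le hvb, intervalIntegral.integral_of_le hvb]
    set μ := volume.restrict (Set.Ioc (0 : ℝ) vbar) with hμ_def
    set φ : ℝ → ℝ → ℝ := fun v s => if s ≤ v then x' s * f v else 0 with hφ_def
    have hstep1 : ∀ v ∈ Set.Ioc (0 : ℝ) vbar, G v * f v = ∫ s, φ v s ∂μ := by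
      intro v hv
      have heq : (fun s => φ v s) = (Set.Iic v).indicator (fun s => x' s * f v) := by
        funext s
        simp only [hφ_def, Set.indicator_apply, Set.mem_Iic]
      rw [heq, hμ_def, setIntegral_indicator measurableSet_Iic]
      have hset : Set.Ioc (0 : ℝ) vbar ∩ Set.Iic v = Set.Ioc 0 v := by
        rw [Set.Ioc_inter_Iic, min_eq_right hv.2]
      rw [hset, MeasureTheory.integral_mul_const]
      congr 1
      rw [hG_def]
      exact intervalIntegral.integral_of_le hv.1.le
    have hstep2 : ∀ s ∈ Set.Ioc (0 : ℝ) vbar, (∫ v, φ v s ∂μ) = (1 - Fc s) * x' s := by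
      intro s hs
      have hsicc : s ∈ Set.Icc (0 : ℝ) vbar := ⟨hs.1.le, hs.2⟩
      have heq : (fun v => φ v s) = (Set.Ici s).indicator (fun v => x' s * f v) := by
        funext v
        simp only [hφ_def, Set.indicator_apply, Set.mem_Ici]
      rw [heq, hμ_def, setIntegral_indicator measurableSet_Ici]
      have hset : Set.Ioc (0 : ℝ) vbar ∩ Set.Ici s = Set.Icc s vbar := by
        ext v
        simp only [Set.mem_inter_iff, Set.mem_Ioc, Set.mem_Ici, Set.mem_Icc]
        constructor
        · rintro ⟨⟨_, h2⟩, h3⟩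
          exact ⟨h3, h2⟩
        · rintro ⟨h1, h2⟩
          exact ⟨⟨lt_of_lt_of_le hs.1 h1, h2⟩, h1⟩
      rw [hset, MeasureTheory.integral_const_mul, integral_Icc_eq_integral_Ioc,
        ← intervalIntegral.integral_of_le hs.2]
      have hsub : (∫ v in s..vbar, f v) = Ft vbar - Ft s := by
        rw [hFt_def]
        exact (intervalIntegral.integral_interval_sub_left
          (hfsub 0 vbar ⟨le_rfl, hvb⟩ ⟨hvb, le_rfl⟩)
          (hfsub 0 s ⟨le_rfl, hvb⟩ hsicc)).symm
      rw [hsub, hFtvbar]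
      have hFcs : Fc s = Ft s := by rw [hFc_def]; simp only [hceq s hsicc]
      rw [hFcs]
      ring
    have hφint : Integrable (Function.uncurry φ) (μ.prod μ) := by
      have hbase : Integrable (fun z : ℝ × ℝ => f z.1 * x' z.2) (μ.prod μ) :=
        hfIoc.mul_prod hx'Ioc
      have heq : Function.uncurry φ
          = {z : ℝ × ℝ | z.2 ≤ z.1}.indicator (fun z => f z.1 * x' z.2) := by
        funext z
        simp only [Function.uncurry, hφ_def, Set.indicator_apply, Set.mem_setOf_eq]
        split_ifs with h
        · ring
        · rfl
      rw [heq]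
      exact hbase.indicator (measurableSet_le measurable_snd measurable_fst)
    calc (∫ v in Set.Ioc (0 : ℝ) vbar, G v * f v)
        = ∫ v, ∫ s, φ v s ∂μ ∂μ :=
          setIntegral_congr_fun measurableSet_Ioc hstep1
      _ = ∫ s, ∫ v, φ v s ∂μ ∂μ := integral_integral_swap hφint
      _ = ∫ s in Set.Ioc (0 : ℝ) vbar, (1 - Fc s) * x' s :=
          setIntegral_congr_fun measurableSet_Ioc hstep2
  -- rewrite both sides
  have hL : (∫ v in (0 : ℝ)..vbar, p v * f v)
      = ∫ v in (0 : ℝ)..vbar, (c v * x' v * f v + p 0 * f v - G v * f v) := by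
    apply intervalIntegral.integral_congr
    intro v hv
    rw [Set.uIcc_of_le hvb] at hv
    show p v * f v = c v * x' v * f v + p 0 * f v - G v * f v
    have henvv := henv v hv
    have hcv := hceq v hv
    have hxv := hx'eq v hv
    have hpv : p v = v * x v + p 0 - G v := by
      have h1 : u v = v * x v - p v := rfl
      linarith [henvv, hu0]
    rw [hpv, hcv, hxv]
    ring
  have hR : (∫ v in (0 : ℝ)..vbar, (v - (1 - F v) / f v) * x v * f v)
      = ∫ v in (0 : ℝ)..vbar, (c v * x' v * f v - (1 - Fc v) * x' v) := by
    apply intervalIntegral.integral_congr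
    intro v hv
    rw [Set.uIcc_of_le hvb] at hv
    show (v - (1 - F v) / f v) * x v * f v = c v * x' v * f v - (1 - Fc v) * x' v
    have hfv : f v ≠ 0 := (hfpos v hv).ne'
    rw [hceq v hv, hx'eq v hv, hFceq v hv]
    field_simp
  have hintf : (∫ v in (0 : ℝ)..vbar, f v) = 1 := hFtvbar
  rw [hL, hR]
  rw [intervalIntegral.integral_sub (hw1.add hw2) hw3,
    intervalIntegral.integral_add hw1 hw2,
    intervalIntegral.integral_sub hw1 hw4,
    intervalIntegral.integral_const_mul, hintf, hfub]
  ring
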